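/- Let K be a complete discrete valuation field with perfect residue field k of characteristic p > 0, and let k' be a perfect field extension of k realized as the union of a filtered directed system of perfect field subextensions k_λ. Then the colimit colim_λ K(k_λ) (where K(k_λ) = W(k_λ) ⊗̂_{W(k)} O_K ⊗_{O_K} K) is a henselian discrete valuation field whose completion is K(k'); in particular, its residue field is k' and its value group is ℤ with the valuation restricting to the normalized valuation on each K(k_λ). -/

import Mathlib

open IsLocalRing

/-- Let `O = O_K(k')` be a complete discrete valuation ring (with uniformizer `π` coming
from `K`), and let `F i = O_K(k_λ) ⊆ O` be a directed family of complete discrete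
valuation subrings, each containing `π` with maximal ideal generated by `π` (the same
uniformizer, ramification index 1), whose union is dense modulo `𝔪_O` (the residue field
`k'` is the union of the `k_λ`).  Then the directed union `⋃ i, F i = colim_λ O_K(k_λ)`
is a henselian discrete valuation ring with maximal ideal generated by `π` (so its
fraction field `colim_λ K(k_λ)` is a henselian discrete valuation field, with value group
`ℤ` and valuation restricting to the normalized valuation at each level), and it is dense
in `O` for the adic topology, i.e. `O = O_K(k')` is its completion. -/
theorem stmt_13 (O : Type*) [CommRing O] [IsDomain O] [IsDiscreteValuationRing O]
    [IsAdicComplete (maximalIdeal O) O]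
    (π : O) (hπ : Irreducible π)
    {ι : Type*} [Nonempty ι] (F : ι → Subring O) (hdir : Directed (· ≤ ·) F)
    (hπF : ∀ i, π ∈ F i)
    (hdvrF : ∀ i, IsDiscreteValuationRing (F i))
    (hmaxF : ∀ i, @maximalIdeal (F i) _
        (@IsDiscreteValuationRing.toIsLocalRing _ _ _ (hdvrF i)) = Ideal.span {⟨π, hπF i⟩})
    (hcompF : ∀ i, IsAdicComplete (@maximalIdeal (F i) _
        (@IsDiscreteValuationRing.toIsLocalRing _ _ _ (hdvrF i))) (F i))
    (hres : ∀ x : O, ∃ i, ∃ y : F i, x - ↑y ∈ maximalIdeal O) :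
    ∃ hdvr : IsDiscreteValuationRing ↥(⨆ i, F i),
      HenselianLocalRing ↥(⨆ i, F i) ∧
      @maximalIdeal ↥(⨆ i, F i) _ (@IsDiscreteValuationRing.toIsLocalRing _ _ _ hdvr) =
        Ideal.span {⟨π, le_iSup F (Classical.arbitrary ι) (hπF _)⟩} ∧
      (∀ (x : O) (n : ℕ), ∃ y ∈ ⨆ i, F i, x - y ∈ maximalIdeal O ^ n) := by
  classical
  have memS : ∀ x : O, x ∈ (⨆ i, F i) ↔ ∃ i, x ∈ F i :=
    fun x => Subring.mem_iSup_of_directed hdir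
  haveI := hdvrF
  haveI := hcompF
  set S := ⨆ i, F i with hSdef
  have hπS : π ∈ S := le_iSup F (Classical.arbitrary ι) (hπF _)
  set π' : ↥S := ⟨π, hπS⟩ with hπ'def
  -- π is irreducible at each level
  have hirrF : ∀ i, Irreducible (⟨π, hπF i⟩ : F i) := fun i =>
    (IsDiscreteValuationRing.irreducible_iff_uniformizer _).mpr (hmaxF i)
  -- π' is not a unit in ↥S
  have hπ'nu : ¬ IsUnit π' := by
    rintro ⟨u, hu⟩
    obtain ⟨m, hmem⟩ := (memS ((↑u⁻¹ : ↥S) : O)).mp (↑u⁻¹ : ↥S).2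
    have h1 : π * ((↑u⁻¹ : ↥S) : O) = 1 := by
      have h0 : (↑u * ↑u⁻¹ : ↥S) = 1 := u.mul_inv
      have h2 := congrArg Subtype.val h0
      rw [hu] at h2
      simpa using h2
    exact (hirrF m).not_isUnit
      (IsUnit.of_mul_eq_one ⟨_, hmem⟩ (Subtype.ext h1))
  -- π' is irreducible in ↥S
  have hπ'irr : Irreducible π' := by
    refine ⟨hπ'nu, ?_⟩
    rintro a b hab
    obtain ⟨ia, ha⟩ := (memS (a : O)).mp a.2
    obtain ⟨ib, hb⟩ := (memS (b : O)).mp b.2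
    obtain ⟨m, hma, hmb⟩ := hdir ia ib
    have habO : (π : O) = ↑a * ↑b := congrArg Subtype.val hab
    have : (⟨π, hπF m⟩ : F m) = ⟨↑a, hma ha⟩ * ⟨↑b, hmb hb⟩ := Subtype.ext habO
    rcases (hirrF m).isUnit_or_isUnit this with h | h
    · exact Or.inl (h.map (Subring.inclusion (le_iSup F m)))
    · exact Or.inr (h.map (Subring.inclusion (le_iSup F m)))
  -- factorization
  have hfac : ∀ x : ↥S, x ≠ 0 → ∃ n : ℕ, Associated (π' ^ n) x := by
    intro x hx
    obtain ⟨m, hmem⟩ := (memS (x : O)).mp x.2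
    have hx' : (⟨↑x, hmem⟩ : F m) ≠ 0 := by
      intro h
      apply hx
      apply Subtype.ext
      simpa using congrArg Subtype.val h
    obtain ⟨n, hn⟩ := IsDiscreteValuationRing.associated_pow_irreducible hx' (hirrF m)
    exact ⟨n, hn.symm.map (Subring.inclusion (le_iSup F m))⟩
  have hdvr : IsDiscreteValuationRing ↥S :=
    IsDiscreteValuationRing.ofHasUnitMulPowIrreducibleFactorization
      ⟨π', hπ'irr, fun {x} hx => hfac x hx⟩
  haveI := hdvr
  have hmaxS : maximalIdeal ↥S = Ideal.span {π'} :=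
    (IsDiscreteValuationRing.irreducible_iff_uniformizer π').mp hπ'irr
  -- density
  have hmaxO : maximalIdeal O = Ideal.span {π} :=
    (IsDiscreteValuationRing.irreducible_iff_uniformizer π).mp hπ
  have dense : ∀ (x : O) (n : ℕ), ∃ y ∈ S, x - y ∈ maximalIdeal O ^ n := by
    intro x n
    induction n with
    | zero => exact ⟨0, zero_mem _, by simp⟩
    | succ n ih =>
      obtain ⟨y, hy, hxy⟩ := ih
      rw [hmaxO, Ideal.span_singleton_pow, Ideal.mem_span_singleton] at hxy
      obtain ⟨z, hz⟩ := hxy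
      obtain ⟨i, w, hw⟩ := hres z
      rw [hmaxO, Ideal.mem_span_singleton] at hw
      obtain ⟨t, ht⟩ := hw
      refine ⟨y + π ^ n * ↑w, add_mem hy
        (mul_mem (pow_mem (le_iSup F i (hπF i)) n) (le_iSup F i w.2)), ?_⟩
      rw [hmaxO, Ideal.span_singleton_pow, Ideal.mem_span_singleton]
      refine ⟨t, ?_⟩
      rw [← sub_sub, hz, ← mul_sub, ht, pow_succ]
      ring
  -- henselian
  have hensel : HenselianLocalRing ↥S := by
    constructor
    intro f hf a₀ ha₀ hder
    obtain ⟨u, hu⟩ := hder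
    have hco : ∀ k : ℕ, ∃ i, ((f.coeff k : ↥S) : O) ∈ F i :=
      fun k => (memS _).mp (f.coeff k).2
    choose g hg using hco
    obtain ⟨i₀, hi₀⟩ := (memS _).mp a₀.2
    obtain ⟨i₁, hi₁⟩ := (memS _).mp (↑u⁻¹ : ↥S).2
    obtain ⟨m, hm⟩ := hdir.finset_le (insert i₀ (insert i₁ (f.support.image g)))
    have hm₀ : F i₀ ≤ F m := hm i₀ (by simp)
    have hm₁ : F i₁ ≤ F m := hm i₁ (by simp)
    set φ : ↥(F m) →+* ↥S := Subring.inclusion (le_iSup F m) with hφdef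
    have hmem : ∀ k, ((f.coeff k : ↥S) : O) ∈ F m := by
      intro k
      by_cases hk : k ∈ f.support
      · exact hm (g k) (by
          simp only [Finset.mem_insert, Finset.mem_image]
          exact Or.inr (Or.inr ⟨k, hk, rfl⟩)) (hg k)
      · rw [Polynomial.notMem_support_iff.mp hk]
        exact zero_mem _
    have hlift : f ∈ Polynomial.lifts φ := by
      rw [Polynomial.lifts_iff_coeff_lifts]
      exact fun k => ⟨⟨_, hmem k⟩, Subtype.ext rfl⟩
    obtain ⟨q, hq, _, hqm⟩ := Polynomial.lifts_and_degree_eq_and_monic hlift hf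
    set b₀ : ↥(F m) := ⟨(a₀ : O), hm₀ hi₀⟩ with hb₀def
    have hb₀ : φ b₀ = a₀ := Subtype.ext rfl
    have heval : ∀ (r : Polynomial ↥(F m)) (c : ↥(F m)),
        (r.map φ).eval (φ c) = φ (r.eval c) := by
      intro r c
      rw [Polynomial.eval_map, Polynomial.eval₂_hom]
    have hq0 : q.eval b₀ ∈ maximalIdeal ↥(F m) := by
      rw [mem_maximalIdeal, mem_nonunits_iff]
      intro hun
      have : IsUnit (f.eval a₀) := by
        rw [← hb₀, ← hq, heval]
        exact hun.map φ
      exact (mem_nonunits_iff.mp ((mem_maximalIdeal _).mp ha₀)) this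
    have hq1 : IsUnit (q.derivative.eval b₀) := by
      have h1 : φ (q.derivative.eval b₀) = Polynomial.eval a₀ (Polynomial.derivative f) := by
        rw [← hb₀, ← heval, ← Polynomial.derivative_map, hq]
      have h2 : ((q.derivative.eval b₀ : ↥(F m)) : O) * ((↑u⁻¹ : ↥S) : O) = 1 := by
        have h3 : (↑u * ↑u⁻¹ : ↥S) = 1 := u.mul_inv
        have h4 := congrArg Subtype.val h3
        have h5 : ((q.derivative.eval b₀ : ↥(F m)) : O) = ((↑u : ↥S) : O) := by
          rw [hu, ← h1]; rfl
        rw [h5, ← MulMemClass.coe_mul, h3, OneMemClass.coe_one]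
      exact IsUnit.of_mul_eq_one ⟨_, hm₁ hi₁⟩ (Subtype.ext h2)
    obtain ⟨b, hroot, hb⟩ :=
      HenselianRing.is_henselian (R := ↥(F m)) (I := maximalIdeal ↥(F m)) q hqm b₀ hq0 (hq1.map (Ideal.Quotient.mk _))
    refine ⟨φ b, ?_, ?_⟩
    · show f.eval (φ b) = 0
      rw [← hq, heval, hroot]
      exact map_zero φ
    · rw [← hb₀, ← map_sub]
      rw [hmaxF m, Ideal.mem_span_singleton] at hb
      obtain ⟨t, ht⟩ := hb
      rw [hmaxS, Ideal.mem_span_singleton]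
      exact ⟨φ t, by rw [ht, map_mul]; congr 1⟩
  exact ⟨hdvr, hensel, hmaxS, dense⟩
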